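/- arXiv:2101.03041 — 2 statements merged into one kernel-verified Lean document; each statement's English description precedes it below -/
import Mathlib

section
/- For all real numbers a, b and x, ∫_{−∞}^{x} Φ(au + b) · (e^{−u²/2}/√(2π)) du = Φ_{−a/√(a²+1)}(b/√(a²+1), x), where Φ_ρ denotes the bivariate standard normal cumulative distribution function with correlation ρ. -/
open MeasureTheory ProbabilityTheory Set
open scoped ENNReal

/-- Standard normal cumulative distribution function `Φ`. -/
noncomputable def stdNormalCDF (x : ℝ) : ℝ :=
  ((gaussianReal 0 1) (Set.Iic x)).toReal

/-- Generalized inverse `Φ⁻¹` of the standard normal cdf. -/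
noncomputable def stdNormalInv : ℝ → ℝ :=
  Function.invFun stdNormalCDF

/-- Bivariate standard normal cdf `Φ_ρ` with correlation `ρ`. -/
noncomputable def Phi2 (ρ x y : ℝ) : ℝ :=
  ∫ u in Set.Iic x, ∫ v in Set.Iic y,
    (1 / (2 * Real.pi * Real.sqrt (1 - ρ ^ 2))) *
      Real.exp (-(u ^ 2 - 2 * ρ * u * v + v ^ 2) / (2 * (1 - ρ ^ 2)))

lemma gauss_cdf_transform (m σ : ℝ) (hσ : 0 < σ) (B : ℝ) :
    ∫ u in Set.Iic B, gaussianPDFReal m ⟨σ ^ 2, sq_nonneg σ⟩ u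
      = stdNormalCDF ((B - m) / σ) := by
  have hv : (⟨σ ^ 2, sq_nonneg σ⟩ : NNReal) ≠ 0 := by
    intro h
    have h2 := congrArg NNReal.toReal h
    change σ ^ 2 = 0 at h2
    exact absurd h2 (pow_pos hσ 2).ne'
  have h1 : (gaussianReal 0 1).map (fun x : ℝ => σ * x)
      = gaussianReal 0 ⟨σ ^ 2, sq_nonneg σ⟩ := by
    rw [gaussianReal_map_const_mul σ]
    simp
    rfl
  have hmap : gaussianReal m ⟨σ ^ 2, sq_nonneg σ⟩
      = (gaussianReal 0 1).map (fun x => σ * x + m) := by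
    have h2 := gaussianReal_map_add_const (μ := 0) (v := (⟨σ ^ 2, sq_nonneg σ⟩ : NNReal)) m
    rw [← h1, Measure.map_map (measurable_add_const m) (measurable_const_mul σ)] at h2
    simp only [Function.comp_def, zero_add] at h2
    exact h2.symm
  have hpre : (fun x : ℝ => σ * x + m) ⁻¹' Set.Iic B = Set.Iic ((B - m) / σ) := by
    ext y
    simp only [Set.mem_preimage, Set.mem_Iic]
    rw [le_div_iff₀ hσ]
    constructor <;> intro h <;> nlinarith
  have key : gaussianReal m ⟨σ ^ 2, sq_nonneg σ⟩ (Set.Iic B)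
      = gaussianReal 0 1 (Set.Iic ((B - m) / σ)) := by
    rw [hmap, Measure.map_apply ((measurable_const_mul σ).add_const m) measurableSet_Iic, hpre]
  have happ := gaussianReal_apply_eq_integral m hv (Set.Iic B)
  rw [key] at happ
  have hnn : 0 ≤ ∫ u in Set.Iic B, gaussianPDFReal m ⟨σ ^ 2, sq_nonneg σ⟩ u :=
    integral_nonneg fun u => gaussianPDFReal_nonneg _ _ _
  unfold stdNormalCDF
  rw [happ, ENNReal.toReal_ofReal hnn]

lemma stdNormalCDF_eq_integral (t : ℝ) :
    stdNormalCDF t = ∫ u in Set.Iic t, Real.exp (-u ^ 2 / 2) / Real.sqrt (2 * Real.pi) := by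
  have h : stdNormalCDF t = ∫ u in Set.Iic t, gaussianPDFReal 0 ⟨(1:ℝ) ^ 2, sq_nonneg 1⟩ u := by
    have := gauss_cdf_transform 0 1 one_pos t
    simp only [sub_zero, div_one] at this
    exact this.symm
  rw [h]
  refine setIntegral_congr_fun measurableSet_Iic fun u _ => ?_
  simp only [gaussianPDFReal, NNReal.coe_mk, one_pow, mul_one, sub_zero]
  erw [NNReal.coe_mk]
  rw [div_eq_inv_mul]
  ring

lemma pointwise_factor (ρ : ℝ) (hρ : ρ ^ 2 < 1) (u v : ℝ) :
    (1 / (2 * Real.pi * Real.sqrt (1 - ρ ^ 2))) *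
        Real.exp (-(u ^ 2 - 2 * ρ * u * v + v ^ 2) / (2 * (1 - ρ ^ 2)))
      = (Real.exp (-v ^ 2 / 2) / Real.sqrt (2 * Real.pi)) *
          gaussianPDFReal (ρ * v) ⟨(Real.sqrt (1 - ρ ^ 2)) ^ 2, sq_nonneg _⟩ u := by
  have h1 : (0:ℝ) < 1 - ρ ^ 2 := by linarith
  have hs : (0:ℝ) < Real.sqrt (1 - ρ ^ 2) := Real.sqrt_pos.mpr h1
  have hsq : (Real.sqrt (1 - ρ ^ 2)) ^ 2 = 1 - ρ ^ 2 := Real.sq_sqrt h1.le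
  have hπ : (0:ℝ) < Real.sqrt (2 * Real.pi) := Real.sqrt_pos.mpr (by positivity)
  have hππ : Real.sqrt (2 * Real.pi) * Real.sqrt (2 * Real.pi) = 2 * Real.pi :=
    Real.mul_self_sqrt (by positivity)
  simp only [gaussianPDFReal, NNReal.coe_mk, hsq]
  erw [NNReal.coe_mk]
  have hconst : Real.sqrt (2 * Real.pi * (1 - ρ ^ 2))
      = Real.sqrt (2 * Real.pi) * Real.sqrt (1 - ρ ^ 2) :=
    Real.sqrt_mul (by positivity) _
  have hexp : -(u ^ 2 - 2 * ρ * u * v + v ^ 2) / (2 * (1 - ρ ^ 2))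
      = -v ^ 2 / 2 + -(u - ρ * v) ^ 2 / (2 * (1 - ρ ^ 2)) := by
    field_simp
    ring
  have hc : (1 / (2 * Real.pi * Real.sqrt (1 - ρ ^ 2)))
      = (1 / Real.sqrt (2 * Real.pi)) *
          (Real.sqrt (2 * Real.pi) * Real.sqrt (1 - ρ ^ 2))⁻¹ := by
    rw [one_div, one_div, ← mul_inv, ← mul_assoc, hππ]
  rw [hconst, hexp, Real.exp_add, hc]
  ring

/-- Lemma 3 (i): `∫_{−∞}^{x} Φ(au + b) e^{−u²/2}/√(2π) du
= Φ_{−a/√(a²+1)}(b/√(a²+1), x)`. -/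
theorem integral_cdf_gaussian (a b x : ℝ) :
    (∫ u in Set.Iic x,
        stdNormalCDF (a * u + b) * (Real.exp (-u ^ 2 / 2) / Real.sqrt (2 * Real.pi)))
      = Phi2 (-a / Real.sqrt (a ^ 2 + 1)) (b / Real.sqrt (a ^ 2 + 1)) x := by
  set s : ℝ := Real.sqrt (a ^ 2 + 1) with hs_def
  have hs1 : (0:ℝ) < a ^ 2 + 1 := by positivity
  have hs : (0:ℝ) < s := Real.sqrt_pos.mpr hs1
  have hssq : s ^ 2 = a ^ 2 + 1 := Real.sq_sqrt hs1.le
  set ρ : ℝ := -a / s with hρ_def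
  have hρ2 : ρ ^ 2 = a ^ 2 / (a ^ 2 + 1) := by
    rw [hρ_def, div_pow, neg_pow, hssq]; ring
  have hρ1 : ρ ^ 2 < 1 := by rw [hρ2, div_lt_one hs1]; linarith
  have h1ρ : (0:ℝ) < 1 - ρ ^ 2 := by linarith
  have h1ρeq : 1 - ρ ^ 2 = 1 / (a ^ 2 + 1) := by rw [hρ2]; field_simp; ring
  set σ : ℝ := Real.sqrt (1 - ρ ^ 2) with hσ_def
  have hσ : (0:ℝ) < σ := Real.sqrt_pos.mpr h1ρ
  have hσ_eq : σ = 1 / s := by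
    rw [hσ_def, h1ρeq, one_div, Real.sqrt_inv, one_div, hs_def]
  set B : ℝ := b / s with hB_def
  set F : ℝ → ℝ → ℝ := fun u v =>
    (1 / (2 * Real.pi * Real.sqrt (1 - ρ ^ 2))) *
      Real.exp (-(u ^ 2 - 2 * ρ * u * v + v ^ 2) / (2 * (1 - ρ ^ 2))) with hF_def
  have inner : ∀ v : ℝ, ∫ u in Set.Iic B, F u v
      = stdNormalCDF (a * v + b) * (Real.exp (-v ^ 2 / 2) / Real.sqrt (2 * Real.pi)) := by
    intro v
    have hpt : ∀ u, F u v = (Real.exp (-v ^ 2 / 2) / Real.sqrt (2 * Real.pi)) *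
        gaussianPDFReal (ρ * v) ⟨σ ^ 2, sq_nonneg _⟩ u := fun u => pointwise_factor ρ hρ1 u v
    simp_rw [hpt]
    rw [integral_const_mul, gauss_cdf_transform (ρ * v) σ hσ B, mul_comm]
    congr 2
    rw [hB_def, hρ_def, hσ_eq]
    field_simp
    ring
  have hFint : Integrable (Function.uncurry F)
      ((volume.restrict (Set.Iic B)).prod (volume.restrict (Set.Iic x))) := by
    have hcont : Continuous (Function.uncurry F) := by
      apply Continuous.mul continuous_const
      apply Real.continuous_exp.comp
      fun_prop
    have hint2 : Integrable (fun z : ℝ × ℝ =>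
        (1 / (2 * Real.pi * Real.sqrt (1 - ρ ^ 2))) *
          (Real.exp (-(1/4) * z.1 ^ 2) * Real.exp (-(1/4) * z.2 ^ 2)))
        (volume.prod volume) := by
      apply Integrable.const_mul
      exact (integrable_exp_neg_mul_sq (by norm_num)).mul_prod
        (integrable_exp_neg_mul_sq (by norm_num))
    have hbound : Integrable (Function.uncurry F) (volume.prod volume) := by
      refine hint2.mono' hcont.aestronglyMeasurable (Filter.Eventually.of_forall fun z => ?_)
      obtain ⟨u, v⟩ := z
      simp only [Function.uncurry, hF_def]
      rw [Real.norm_eq_abs, abs_of_nonneg (by positivity), ← Real.exp_add]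
      have hcpos : (0:ℝ) ≤ 1 / (2 * Real.pi * Real.sqrt (1 - ρ ^ 2)) := by positivity
      refine mul_le_mul_of_nonneg_left (Real.exp_le_exp.mpr ?_) hcpos
      rw [div_le_iff₀ (by positivity)]
      nlinarith [sq_nonneg (u - ρ * v), sq_nonneg (v - ρ * u)]
    rw [Measure.prod_restrict]
    exact hbound.restrict
  calc (∫ v in Set.Iic x,
        stdNormalCDF (a * v + b) * (Real.exp (-v ^ 2 / 2) / Real.sqrt (2 * Real.pi)))
      = ∫ v in Set.Iic x, ∫ u in Set.Iic B, F u v := by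
        refine setIntegral_congr_fun measurableSet_Iic fun v _ => ?_
        rw [inner v]
    _ = ∫ u in Set.Iic B, ∫ v in Set.Iic x, F u v :=
        (integral_integral_swap hFint).symm
    _ = Phi2 ρ B x := rfl
end

section
/- For all real numbers x, y and every ρ ∈ (0,1), Φ_{√(1−ρ²)}(x,y) = Φ(y)·Φ((x − √(1−ρ²)·y)/ρ) + Φ(x) − Φ_ρ(x, (x − √(1−ρ²)·y)/ρ). -/
open MeasureTheory ProbabilityTheory Set
open scoped ENNReal NNReal

namespace PhiAux

/-- Standard normal density. -/
noncomputable def phi (u : ℝ) : ℝ := (Real.sqrt (2 * Real.pi))⁻¹ * Real.exp (-u ^ 2 / 2)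

lemma phi_nonneg (u : ℝ) : 0 ≤ phi u := by
  unfold phi; positivity

lemma phi_meas : Measurable phi := by
  unfold phi; fun_prop

lemma phi_integrable : Integrable phi := by
  have h : phi = fun u => (Real.sqrt (2 * Real.pi))⁻¹ * Real.exp (-(1/2 : ℝ) * u ^ 2) := by
    funext u; unfold phi; ring_nf
  rw [h]
  exact (integrable_exp_neg_mul_sq (by norm_num)).const_mul _

lemma integral_phi : ∫ u, phi u = 1 := by
  have h : ∀ u : ℝ, phi u = (Real.sqrt (2 * Real.pi))⁻¹ * Real.exp (-(1/2 : ℝ) * u ^ 2) := by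
    intro u; unfold phi; ring_nf
  rw [show (fun u : ℝ => phi u) = fun u => (Real.sqrt (2 * Real.pi))⁻¹ *
    Real.exp (-(1/2 : ℝ) * u ^ 2) from funext h]
  rw [MeasureTheory.integral_const_mul, integral_gaussian]
  rw [show Real.pi / (1/2 : ℝ) = 2 * Real.pi by ring]
  rw [inv_mul_cancel₀ (by positivity)]

lemma cdf_scaled (t m y : ℝ) (ht : 0 < t) :
    ∫ v in Iic y, t⁻¹ * phi ((v - m) / t) = stdNormalCDF ((y - m) / t) := by
  set V : ℝ≥0 := ⟨t ^ 2, sq_nonneg t⟩ with hVdef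
  have hV0 : V ≠ 0 := by
    intro h
    have : (V : ℝ) = 0 := by rw [h]; simp
    simp only [hVdef, NNReal.coe_mk] at this
    nlinarith [show t ^ 2 = 0 from this]
  have hVcoe : (V : ℝ) = t ^ 2 := rfl
  have hpdf : ∀ v, gaussianPDFReal m V v = t⁻¹ * phi ((v - m) / t) := by
    intro v
    unfold gaussianPDFReal phi
    rw [hVcoe]
    rw [show 2 * Real.pi * t ^ 2 = (2 * Real.pi) * t ^ 2 by ring,
      Real.sqrt_mul (by positivity), Real.sqrt_sq ht.le]
    rw [div_pow]
    rw [mul_inv]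
    have htsq : ((v - m) ^ 2 / t ^ 2) = (v - m) ^ 2 / t ^ 2 := rfl
    ring_nf
  have hmeas : Measurable fun w : ℝ => t * w + m :=
    (measurable_const_mul t).add_const m
  have hmap : gaussianReal m V = Measure.map (fun w => t * w + m) (gaussianReal 0 1) := by
    have h1 : Measure.map (fun w : ℝ => t * w) (gaussianReal 0 1) = gaussianReal 0 V := by
      have := gaussianReal_map_const_mul (μ := 0) (v := 1) t
      simp only [mul_zero, mul_one] at this
      exact this
    have h2 : Measure.map (fun w : ℝ => w + m) (gaussianReal 0 V) = gaussianReal m V := by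
      have := gaussianReal_map_add_const (μ := 0) (v := V) m
      simpa using this
    rw [← h2, ← h1, Measure.map_map (measurable_add_const m) (measurable_const_mul t)]
    rfl
  have hpre : (fun w : ℝ => t * w + m) ⁻¹' Iic y = Iic ((y - m) / t) := by
    ext w
    simp only [Set.mem_preimage, Set.mem_Iic]
    rw [le_div_iff₀ ht]
    constructor <;> intro h <;> nlinarith
  have key : (gaussianReal m V) (Iic y) = (gaussianReal 0 1) (Iic ((y - m) / t)) := by
    rw [hmap, Measure.map_apply hmeas measurableSet_Iic, hpre]
  have h2 : (gaussianReal m V) (Iic y)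
      = ENNReal.ofReal (∫ v in Iic y, t⁻¹ * phi ((v - m) / t)) := by
    rw [gaussianReal_apply_eq_integral m hV0]
    congr 1
    exact setIntegral_congr_fun measurableSet_Iic (fun v _ => hpdf v)
  have h3 := congrArg ENNReal.toReal (h2.symm.trans key)
  rw [ENNReal.toReal_ofReal (setIntegral_nonneg measurableSet_Iic fun v _ => by
    have := phi_nonneg ((v - m) / t); positivity)] at h3
  exact h3

lemma cdf_eq (a : ℝ) : stdNormalCDF a = ∫ u in Iic a, phi u := by
  have h := cdf_scaled 1 0 a one_pos
  simp only [sub_zero, div_one, inv_one, one_mul] at h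
  exact h.symm

lemma cdf_nonneg (a : ℝ) : 0 ≤ stdNormalCDF a := ENNReal.toReal_nonneg

lemma cdf_le_one (a : ℝ) : stdNormalCDF a ≤ 1 := by
  have h : (gaussianReal 0 1) (Iic a) ≤ 1 := prob_le_one
  have := ENNReal.toReal_mono ENNReal.one_ne_top h
  simpa [stdNormalCDF] using this

lemma cdf_mono : Monotone stdNormalCDF := by
  intro a b hab
  exact ENNReal.toReal_mono (measure_ne_top _ _)
    (measure_mono (Set.Iic_subset_Iic.mpr hab))

lemma cdf_meas : Measurable stdNormalCDF := cdf_mono.measurable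

lemma cdf_neg (a : ℝ) : stdNormalCDF (-a) = 1 - stdNormalCDF a := by
  have h1 : stdNormalCDF (-a) = ∫ u in Ioi a, phi u := by
    rw [cdf_eq]
    have hsym : ∀ u : ℝ, phi u = phi (-u) := by
      intro u; unfold phi; rw [neg_sq]
    calc ∫ u in Iic (-a), phi u = ∫ u in Iic (-a), phi (-u) :=
          setIntegral_congr_fun measurableSet_Iic (fun u _ => hsym u)
      _ = ∫ u in Ioi (-(-a)), phi u := integral_comp_neg_Iic (-a) phi
      _ = ∫ u in Ioi a, phi u := by rw [neg_neg]
  have h2 : stdNormalCDF a + ∫ u in Ioi a, phi u = 1 := by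
    rw [cdf_eq, ← integral_phi]
    have h := integral_add_compl (s := Iic a) (f := phi) measurableSet_Iic phi_integrable
    rw [compl_Iic] at h
    exact h
  linarith

lemma cdf_sub {a b : ℝ} (hab : a ≤ b) :
    stdNormalCDF b - stdNormalCDF a = ∫ t in Ioc a b, phi t := by
  rw [cdf_eq, cdf_eq, ← Iic_union_Ioc_eq_Iic hab,
    setIntegral_union (Iic_disjoint_Ioc le_rfl) measurableSet_Ioc
      phi_integrable.integrableOn phi_integrable.integrableOn]
  ring

lemma int_phi_mul {x : ℝ} (g : ℝ → ℝ) (hgm : Measurable g)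
    (hg0 : ∀ t, 0 ≤ g t) (hg1 : ∀ t, g t ≤ 1) :
    IntegrableOn (fun u => phi u * g u) (Iic x) := by
  refine Integrable.mono' phi_integrable.restrict
    ((phi_meas.mul hgm).aestronglyMeasurable) ?_
  refine ae_of_all _ fun u => ?_
  rw [Real.norm_eq_abs, abs_mul, abs_of_nonneg (phi_nonneg u), abs_of_nonneg (hg0 u)]
  nlinarith [phi_nonneg u, hg0 u, hg1 u]

lemma phi2_repr (r x y : ℝ) (hr0 : 0 < r) (hr1 : r < 1) :
    Phi2 r x y = ∫ u in Iic x, phi u * stdNormalCDF ((y - r * u) / Real.sqrt (1 - r ^ 2)) := by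
  have h1r : 0 < 1 - r ^ 2 := by nlinarith
  set t := Real.sqrt (1 - r ^ 2) with htdef
  have ht : 0 < t := Real.sqrt_pos.mpr h1r
  have ht0 : t ≠ 0 := ht.ne'
  have ht2 : t ^ 2 = 1 - r ^ 2 := Real.sq_sqrt h1r.le
  have hss : Real.sqrt (2 * Real.pi) * Real.sqrt (2 * Real.pi) = 2 * Real.pi :=
    Real.mul_self_sqrt (by positivity)
  have hs0 : Real.sqrt (2 * Real.pi) ≠ 0 := by positivity
  have hπ : (Real.pi : ℝ) ≠ 0 := Real.pi_ne_zero
  unfold Phi2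
  rw [← htdef]
  refine setIntegral_congr_fun measurableSet_Iic (fun u _ => ?_)
  have hpt : ∀ v : ℝ, (1 / (2 * Real.pi * t)) *
      Real.exp (-(u ^ 2 - 2 * r * u * v + v ^ 2) / (2 * (1 - r ^ 2)))
      = phi u * (t⁻¹ * phi ((v - r * u) / t)) := by
    intro v
    unfold phi
    have hexp : -(u ^ 2 - 2 * r * u * v + v ^ 2) / (2 * (1 - r ^ 2))
        = -u ^ 2 / 2 + -((v - r * u) / t) ^ 2 / 2 := by
      rw [div_pow, ht2]
      field_simp
      ring
    rw [hexp, Real.exp_add]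
    rw [show (1 : ℝ) / (2 * Real.pi * t)
        = (Real.sqrt (2 * Real.pi))⁻¹ * (t⁻¹ * (Real.sqrt (2 * Real.pi))⁻¹) by
      rw [← hss]
      field_simp
      ring_nf
      rw [Real.sqrt_sq (by positivity)]]
    ring
  calc ∫ v in Iic y, (1 / (2 * Real.pi * t)) *
        Real.exp (-(u ^ 2 - 2 * r * u * v + v ^ 2) / (2 * (1 - r ^ 2)))
      = ∫ v in Iic y, phi u * (t⁻¹ * phi ((v - r * u) / t)) :=
        setIntegral_congr_fun measurableSet_Iic (fun v _ => hpt v)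
    _ = phi u * ∫ v in Iic y, t⁻¹ * phi ((v - r * u) / t) := integral_const_mul _ _
    _ = phi u * stdNormalCDF ((y - r * u) / t) := by rw [cdf_scaled t (r * u) y ht]

end PhiAux

open PhiAux

/-- Lemma 3 (ii): for `ρ ∈ (0,1)`,
`Φ_{√(1−ρ²)}(x,y) = Φ(y)Φ((x − √(1−ρ²)y)/ρ) + Φ(x) − Φ_ρ(x, (x − √(1−ρ²)y)/ρ)`. -/
theorem Phi2_sqrt_identity (x y ρ : ℝ) (hρ : ρ ∈ Set.Ioo (0 : ℝ) 1) :
    Phi2 (Real.sqrt (1 - ρ ^ 2)) x y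
      = stdNormalCDF y * stdNormalCDF ((x - Real.sqrt (1 - ρ ^ 2) * y) / ρ)
        + stdNormalCDF x
        - Phi2 ρ x ((x - Real.sqrt (1 - ρ ^ 2) * y) / ρ) := by
  obtain ⟨hρ0, hρ1⟩ := hρ
  have h1ρ : 0 < 1 - ρ ^ 2 := by nlinarith
  set s := Real.sqrt (1 - ρ ^ 2) with hsdef
  have hs0 : 0 < s := Real.sqrt_pos.mpr h1ρ
  have hs2 : s ^ 2 = 1 - ρ ^ 2 := Real.sq_sqrt h1ρ.le
  have hs1 : s < 1 := by nlinarith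
  have hsum : ρ ^ 2 + s ^ 2 = 1 := by rw [hs2]; ring
  set z := (x - s * y) / ρ with hzdef
  have hρz : ρ * z = x - s * y := by rw [hzdef]; field_simp
  have hsρ : Real.sqrt (1 - s ^ 2) = ρ := by
    rw [show (1 : ℝ) - s ^ 2 = ρ ^ 2 by nlinarith, Real.sqrt_sq hρ0.le]
  -- single-integral representations
  have hA : Phi2 s x y = ∫ u in Iic x, phi u * stdNormalCDF ((y - s * u) / ρ) := by
    rw [phi2_repr s x y hs0 hs1, hsρ]
  have hB : Phi2 ρ x z = ∫ u in Iic x, phi u * stdNormalCDF ((z - ρ * u) / s) := by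
    rw [phi2_repr ρ x z hρ0 hρ1, ← hsdef]
  have hC : stdNormalCDF x = ∫ u in Iic x, phi u := cdf_eq x
  -- integrability
  have int1 : IntegrableOn (fun u => phi u * stdNormalCDF ((y - s * u) / ρ)) (Iic x) := by
    refine int_phi_mul _ (cdf_meas.comp (by fun_prop)) (fun t => cdf_nonneg _)
      (fun t => cdf_le_one _)
  have int2 : IntegrableOn (fun u => phi u * stdNormalCDF ((z - ρ * u) / s)) (Iic x) := by
    refine int_phi_mul _ (cdf_meas.comp (by fun_prop)) (fun t => cdf_nonneg _)
      (fun t => cdf_le_one _)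
  have int3 : IntegrableOn phi (Iic x) := phi_integrable.integrableOn
  -- the geometric setup
  set T : ℝ × ℝ → ℝ × ℝ := fun p => (ρ * p.1 - s * p.2, s * p.1 + ρ * p.2) with hTdef
  have hTm : Measurable T := by
    rw [hTdef]; fun_prop
  set H : ℝ × ℝ → ℝ := fun p => phi p.1 * phi p.2 with hHdef
  set S : Set (ℝ × ℝ) := T ⁻¹' (Iio z ×ˢ Iic y) with hSdef
  have hSm : MeasurableSet S := hTm (measurableSet_Iio.prod measurableSet_Iic)
  have hHint : Integrable H := by
    rw [hHdef, Measure.volume_eq_prod]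
    exact phi_integrable.mul_prod phi_integrable
  have hInd : Integrable (S.indicator H) := hHint.indicator hSm
  have hkey1 : ∀ u : ℝ, (ρ * u - z) * ρ - (y - s * u) * s = u - x := by
    intro u
    linear_combination u * hsum - hρz
  have hslice : ∀ u t : ℝ, ((u, t) ∈ S) ↔ t ∈ Ioc ((ρ * u - z) / s) ((y - s * u) / ρ) := by
    intro u t
    simp only [hSdef, Set.mem_preimage, hTdef, Set.mem_prod, Set.mem_Iio, Set.mem_Iic,
      Set.mem_Ioc]
    constructor
    · rintro ⟨h1, h2⟩
      constructor
      · rw [div_lt_iff₀ hs0]; nlinarith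
      · rw [le_div_iff₀ hρ0]; nlinarith
    · rintro ⟨h1, h2⟩
      rw [div_lt_iff₀ hs0] at h1
      rw [le_div_iff₀ hρ0] at h2
      constructor <;> nlinarith
  have hF : ∀ u : ℝ, (∫ t, S.indicator H (u, t))
      = phi u * ∫ t in Ioc ((ρ * u - z) / s) ((y - s * u) / ρ), phi t := by
    intro u
    have heq : (fun t => S.indicator H (u, t))
        = (Ioc ((ρ * u - z) / s) ((y - s * u) / ρ)).indicator (fun t => phi u * phi t) := by
      funext t
      by_cases h : (u, t) ∈ S
      · rw [Set.indicator_of_mem h, Set.indicator_of_mem ((hslice u t).mp h)]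
      · rw [Set.indicator_of_notMem h,
          Set.indicator_of_notMem (fun hc => h ((hslice u t).mpr hc))]
    rw [heq, integral_indicator measurableSet_Ioc, integral_const_mul]
  -- pointwise identity on Iic x
  have step1 : ∀ u ∈ Iic x,
      phi u * stdNormalCDF ((y - s * u) / ρ) + phi u * stdNormalCDF ((z - ρ * u) / s) - phi u
      = ∫ t, S.indicator H (u, t) := by
    intro u hu
    simp only [Set.mem_Iic] at hu
    have hab : (ρ * u - z) / s ≤ (y - s * u) / ρ := by
      rw [div_le_div_iff₀ hs0 hρ0]
      linarith [hkey1 u]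
    have hneg : stdNormalCDF ((ρ * u - z) / s) = 1 - stdNormalCDF ((z - ρ * u) / s) := by
      rw [show (ρ * u - z) / s = -((z - ρ * u) / s) by ring]
      exact cdf_neg _
    rw [hF u, ← cdf_sub hab, hneg]
    ring
  -- vanishing outside Iic x
  have hvanish : ∀ u ∈ (Iic x)ᶜ, (∫ t, S.indicator H (u, t)) = 0 := by
    intro u hu
    simp only [Set.mem_compl_iff, Set.mem_Iic, not_le] at hu
    rw [hF u, Set.Ioc_eq_empty (by
      intro hlt
      rw [div_lt_div_iff₀ hs0 hρ0] at hlt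
      linarith [hkey1 u])]
    simp
  have hFint : Integrable (fun u => ∫ t, S.indicator H (u, t)) := by
    have h := hInd
    rw [Measure.volume_eq_prod] at h
    exact h.integral_prod_left
  have hInd' : Integrable (S.indicator H) (volume.prod volume) := by
    rwa [← Measure.volume_eq_prod]
  -- rotation invariance of H
  have hHT : ∀ p : ℝ × ℝ, H p = H (T p) := by
    intro p
    simp only [hHdef, hTdef]
    unfold phi
    rw [mul_mul_mul_comm, ← Real.exp_add, mul_mul_mul_comm, ← Real.exp_add]
    congr 2
    linear_combination ((p.1 ^ 2 + p.2 ^ 2) / 2) * hsum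
  have hindTrans : S.indicator H = fun p => ((Iio z ×ˢ Iic y).indicator H) (T p) := by
    funext p
    by_cases h : p ∈ S
    · rw [Set.indicator_of_mem h, Set.indicator_of_mem (by exact h), ← hHT p]
    · rw [Set.indicator_of_notMem h, Set.indicator_of_notMem (by exact h)]
  -- measure preservation of the rotation
  set L : (ℝ × ℝ) →ₗ[ℝ] ℝ × ℝ :=
      LinearMap.prod (ρ • LinearMap.fst ℝ ℝ ℝ - s • LinearMap.snd ℝ ℝ ℝ)
        (s • LinearMap.fst ℝ ℝ ℝ + ρ • LinearMap.snd ℝ ℝ ℝ) with hLdef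
  have hLT : ⇑L = T := by
    funext p
    simp [hLdef, hTdef, LinearMap.prod_apply, smul_eq_mul]
  have hdet : LinearMap.det L = 1 := by
    rw [← LinearMap.det_toMatrix (Module.Basis.finTwoProd ℝ), Matrix.det_fin_two]
    simp only [LinearMap.toMatrix_apply, Module.Basis.finTwoProd_zero, Module.Basis.finTwoProd_one,
      Module.Basis.coe_finTwoProd_repr, hLT, hTdef]
    simp only [Matrix.cons_val_zero, Matrix.cons_val_one, Matrix.head_cons]
    nlinarith [hsum]
  have haar : (volume : Measure (ℝ × ℝ)).IsAddHaarMeasure := by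
    rw [Measure.volume_eq_prod]
    infer_instance
  have hmapT : Measure.map T volume = volume := by
    rw [← hLT, Measure.map_linearMap_addHaar_eq_smul_addHaar volume (by rw [hdet]; norm_num),
      hdet]
    norm_num
  have hpres : MeasurePreserving T volume volume := ⟨hTm, hmapT⟩
  let e : (ℝ × ℝ) ≃ᵐ ℝ × ℝ :=
  { toFun := T
    invFun := fun q => (ρ * q.1 + s * q.2, -s * q.1 + ρ * q.2)
    left_inv := fun p => by
      simp only [hTdef]
      rw [Prod.ext_iff]
      constructor
      · simp only
        linear_combination p.1 * hsum
      · simp only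
        linear_combination p.2 * hsum
    right_inv := fun q => by
      simp only [hTdef]
      rw [Prod.ext_iff]
      constructor
      · simp only
        linear_combination q.1 * hsum
      · simp only
        linear_combination q.2 * hsum
    measurable_toFun := hTm
    measurable_invFun :=
      (by fun_prop : Measurable fun q : ℝ × ℝ => (ρ * q.1 + s * q.2, -s * q.1 + ρ * q.2)) }
  have hemb : MeasurableEmbedding T := e.measurableEmbedding
  -- the key computation
  have hadd : (∫ u in Iic x, (phi u * stdNormalCDF ((y - s * u) / ρ)
        + phi u * stdNormalCDF ((z - ρ * u) / s)))
      = (∫ u in Iic x, phi u * stdNormalCDF ((y - s * u) / ρ))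
        + (∫ u in Iic x, phi u * stdNormalCDF ((z - ρ * u) / s)) := integral_add int1 int2
  have hsub : (∫ u in Iic x, (phi u * stdNormalCDF ((y - s * u) / ρ)
        + phi u * stdNormalCDF ((z - ρ * u) / s) - phi u))
      = (∫ u in Iic x, (phi u * stdNormalCDF ((y - s * u) / ρ)
        + phi u * stdNormalCDF ((z - ρ * u) / s))) - (∫ u in Iic x, phi u) :=
    integral_sub (int1.add int2) int3
  have hkey : (∫ u in Iic x, phi u * stdNormalCDF ((y - s * u) / ρ))
      + (∫ u in Iic x, phi u * stdNormalCDF ((z - ρ * u) / s))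
      - (∫ u in Iic x, phi u) = stdNormalCDF z * stdNormalCDF y := by
    rw [← hadd, ← hsub]
    calc ∫ u in Iic x, (phi u * stdNormalCDF ((y - s * u) / ρ)
          + phi u * stdNormalCDF ((z - ρ * u) / s) - phi u)
        = ∫ u in Iic x, (∫ t, S.indicator H (u, t)) :=
          setIntegral_congr_fun measurableSet_Iic step1
      _ = ∫ u, (∫ t, S.indicator H (u, t)) := by
          rw [← integral_add_compl measurableSet_Iic hFint,
            setIntegral_eq_zero_of_forall_eq_zero hvanish, add_zero]
      _ = ∫ p, S.indicator H p ∂(volume.prod volume) := by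
          have h := integral_integral (f := fun u t => S.indicator H (u, t))
            (by exact hInd')
          simpa using h
      _ = ∫ p, S.indicator H p := by rw [← Measure.volume_eq_prod]
      _ = ∫ p, ((Iio z ×ˢ Iic y).indicator H) (T p) := by rw [hindTrans]
      _ = ∫ q, ((Iio z ×ˢ Iic y).indicator H) q := hpres.integral_comp hemb _
      _ = ∫ q in Iio z ×ˢ Iic y, H q :=
          integral_indicator (measurableSet_Iio.prod measurableSet_Iic)
      _ = (∫ w in Iio z, phi w) * ∫ v in Iic y, phi v := by
          rw [Measure.volume_eq_prod, hHdef]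
          exact setIntegral_prod_mul phi phi _ _
      _ = stdNormalCDF z * stdNormalCDF y := by
          rw [setIntegral_congr_set Iio_ae_eq_Iic, ← cdf_eq, ← cdf_eq]
  rw [hA, hB, hC]
  rw [mul_comm (stdNormalCDF z)] at hkey
  linarith [hkey]
end
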